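/- For every n ≥ 1, the identity Σ_{T∈𝒫_n} x^{oleaf(T)} y^{yleaf(T)} = Σ_{T∈𝒫_n} x^{elint(T)} y^{elleaf(T)} holds in ℤ[x,y]. -/

import Mathlib

/-- Labeled plane trees: a node with a label in `ℕ` and a (left-to-right ordered)
list of children. -/
inductive LTree : Type where
  | node : ℕ → List LTree → LTree

namespace LTree

/-- The label of the root. -/
def label : LTree → ℕ
  | node a _ => a

/-- The list of children of the root, from left to right. -/
def children : LTree → List LTree
  | node _ cs => cs

/-- A tree consisting of a single node is a leaf. -/
def isLeaf (t : LTree) : Bool := t.children.isEmpty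

/-- The list of all subtrees (i.e. all nodes) of a tree. -/
def subtrees : LTree → List LTree
  | node a cs => node a cs :: (cs.attach.map (fun c => subtrees c.1)).flatten
decreasing_by
  simp only [LTree.node.sizeOf_spec]
  have := List.sizeOf_lt_of_mem c.2
  omega

/-- The multiset of labels of all nodes of a tree. -/
def labels (T : LTree) : Multiset ℕ := (T.subtrees.map label : List ℕ)

/-- `T` is a weakly increasing tree on the multiset `M`: the root is labeled `0`,
the multiset of labels is `M ∪ {0}`, labels weakly increase along root-to-leaf paths,
and the labels of the children of each node weakly increase from right to left. -/
def IsWIT (M : Multiset ℕ) (T : LTree) : Prop :=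
  T.label = 0 ∧ T.labels = 0 ::ₘ M ∧
  ∀ t ∈ T.subtrees, (∀ c ∈ t.children, t.label ≤ c.label) ∧
    List.Chain' (fun a b => b ≤ a) (t.children.map label)

/-- `T` is (an encoding of) a plane tree with `n` edges: all labels are zero
and there are `n + 1` nodes. -/
def IsPlane (n : ℕ) (T : LTree) : Prop :=
  (∀ t ∈ T.subtrees, t.label = 0) ∧ T.subtrees.length = n + 1

/-- The number of singleton leaves: leaves that are the only child of their parent. -/
def sleaf (T : LTree) : ℕ :=
  T.subtrees.countP (fun t => match t.children with
    | [c] => c.isLeaf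
    | _ => false)

/-- The number of elder leaves: leaves that are the leftmost child of their parent
and have siblings. -/
def eleaf (T : LTree) : ℕ :=
  T.subtrees.countP (fun t => match t.children with
    | c :: _ :: _ => c.isLeaf
    | _ => false)

/-- The number of young leaves: leaves that are not the leftmost child of their parent. -/
def yleaf (T : LTree) : ℕ :=
  (T.subtrees.map (fun t => t.children.tail.countP isLeaf)).sum

/-- The number of young internal nodes: internal nodes whose leftmost child is internal. -/
def yint (T : LTree) : ℕ :=
  T.subtrees.countP (fun t => match t.children with
    | c :: _ => !c.isLeaf
    | _ => false)

/-- The number of singleton internal nodes: parents of a singleton leaf. -/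
def sint (T : LTree) : ℕ :=
  T.subtrees.countP (fun t => match t.children with
    | [c] => c.isLeaf
    | _ => false)

/-- The number of elder internal nodes: parents of an elder leaf. -/
def eint (T : LTree) : ℕ :=
  T.subtrees.countP (fun t => match t.children with
    | c :: _ :: _ => c.isLeaf
    | _ => false)

/-- The number of old leaves: leaves that are the leftmost child of their parent. -/
def oleaf (T : LTree) : ℕ := sleaf T + eleaf T

/-- The number of old internal nodes. -/
def oint (T : LTree) : ℕ := sint T + eint T

/-- All subtrees of a tree together with their levels, the root being at level `d`. -/
def subtreesL (d : ℕ) : LTree → List (ℕ × LTree)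
  | node a cs => (d, node a cs) :: (cs.attach.map (fun c => subtreesL (d + 1) c.1)).flatten
decreasing_by
  simp only [LTree.node.sizeOf_spec]
  have := List.sizeOf_lt_of_mem c.2
  omega

/-- The number of internal nodes at even levels. -/
def elint (T : LTree) : ℕ :=
  (subtreesL 0 T).countP (fun p => p.1 % 2 == 0 && !p.2.isLeaf)

/-- The number of leaves at even levels. -/
def elleaf (T : LTree) : ℕ :=
  (subtreesL 0 T).countP (fun p => p.1 % 2 == 0 && p.2.isLeaf)

end LTree

namespace LTree

mutual
def decEq : (t s : LTree) → Decidable (t = s)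
  | node a cs, node b ds =>
    match Nat.decEq a b with
    | isFalse h => isFalse (by simp [h])
    | isTrue h =>
      match decEqList cs ds with
      | isTrue h2 => isTrue (by rw [h, h2])
      | isFalse h2 => isFalse (by simp [h2])

def decEqList : (l m : List LTree) → Decidable (l = m)
  | [], [] => isTrue rfl
  | [], _::_ => isFalse (by simp)
  | _::_, [] => isFalse (by simp)
  | x::xs, y::ys =>
    match decEq x y with
    | isFalse h => isFalse (by simp [h])
    | isTrue h =>
      match decEqList xs ys with
      | isTrue h2 => isTrue (by rw [h, h2])
      | isFalse h2 => isFalse (by simp [h2])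
end

instance : DecidableEq LTree := decEq

theorem subtrees_node (a : ℕ) (cs : List LTree) :
    subtrees (node a cs) = node a cs :: (cs.map subtrees).flatten := by
  rw [subtrees]
  simp [List.attach_map_val]

theorem subtreesL_node (d a : ℕ) (cs : List LTree) :
    subtreesL d (node a cs) = (d, node a cs) :: (cs.map (subtreesL (d+1))).flatten := by
  rw [subtreesL]
  simp [List.attach_map_val]

end LTree
namespace LTree

theorem subtreesL_succ : ∀ (d : ℕ) (T : LTree),
    subtreesL (d+1) T = (subtreesL d T).map (fun p => (p.1+1, p.2))
  | d, node a cs => by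
    rw [subtreesL_node, subtreesL_node]
    simp only [List.map_cons, List.map_flatten, List.map_map]
    congr 1
    congr 1
    refine List.map_congr_left (fun c hc => ?_)
    have := List.sizeOf_lt_of_mem hc
    exact subtreesL_succ (d+1) c
decreasing_by
  simp only [LTree.node.sizeOf_spec]; omega

/-- Attach a new leftmost child subtree to the root of `T₂`. -/
def compose (T₁ T₂ : LTree) : LTree := node 0 (T₁ :: T₂.children)

theorem eta : ∀ (T : LTree), node T.label T.children = T
  | node _ _ => rfl

def planeFinset : ℕ → Finset LTree
  | 0 => {node 0 []}
  | n+1 => (Finset.range (n+1)).attach.biUnion fun a =>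
      ((planeFinset a.1) ×ˢ (planeFinset (n - a.1))).image fun p => compose p.1 p.2
decreasing_by
  · have := Finset.mem_range.mp a.2; omega
  · omega

end LTree
namespace LTree

theorem subtrees_compose (T₁ T₂ : LTree) :
    subtrees (compose T₁ T₂) = compose T₁ T₂ :: (subtrees T₁ ++ (subtrees T₂).tail) := by
  obtain ⟨b, cs⟩ := T₂
  rw [compose, children, subtrees_node, subtrees_node]
  simp

theorem subtreesL_compose (T₁ T₂ : LTree) :
    subtreesL 0 (compose T₁ T₂) = (0, compose T₁ T₂) ::
      ((subtreesL 0 T₁).map (fun p => (p.1+1, p.2)) ++ (subtreesL 0 T₂).tail) := by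
  obtain ⟨b, cs⟩ := T₂
  rw [compose, children, subtreesL_node, subtreesL_node]
  simp [subtreesL_succ]

theorem length_subtrees_pos (T : LTree) : 0 < (subtrees T).length := by
  obtain ⟨a, cs⟩ := T; rw [subtrees_node]; simp

theorem self_mem_subtrees (T : LTree) : T ∈ subtrees T := by
  obtain ⟨a, cs⟩ := T; rw [subtrees_node]; simp

theorem mem_subtrees_of_mem_child {t c : LTree} (cs : List LTree) (a : ℕ)
    (hc : c ∈ cs) (ht : t ∈ subtrees c) : t ∈ subtrees (node a cs) := by
  rw [subtrees_node]
  refine List.mem_cons_of_mem _ (List.mem_flatten.mpr ⟨subtrees c, ?_, ht⟩)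
  exact List.mem_map_of_mem hc

theorem mem_planeFinset : ∀ (n : ℕ) (T : LTree), T ∈ planeFinset n ↔ IsPlane n T := by
  intro n
  induction n using Nat.strong_induction_on with
  | _ n IH =>
    intro T
    match n with
    | 0 =>
      rw [planeFinset]
      simp only [Finset.mem_singleton]
      constructor
      · rintro rfl
        refine ⟨?_, ?_⟩ <;> rw [subtrees_node] <;> simp [label]
      · rintro ⟨h1, h2⟩
        obtain ⟨a, cs⟩ := T
        rw [subtrees_node] at h2
        simp only [List.length_cons, Nat.add_left_cancel_iff] at h2
        have hcs : cs = [] := by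
          cases cs with
          | nil => rfl
          | cons c cs' =>
            exfalso
            simp only [List.map_cons, List.flatten_cons, List.length_append] at h2
            have := length_subtrees_pos c
            omega
        subst hcs
        have := h1 _ (self_mem_subtrees (node a []))
        rw [label] at this; subst this; rfl
    | n+1 =>
      rw [planeFinset]
      simp only [Finset.mem_biUnion, Finset.mem_attach, Finset.mem_image, Finset.mem_product,
        true_and, Subtype.exists, Finset.mem_range, Prod.exists]
      constructor
      · rintro ⟨a, ha, T₁, T₂, ⟨h1, h2⟩, rfl⟩
        have hp1 := (IH a ha T₁).mp h1
        have hp2 := (IH (n - a) (by omega) T₂).mp h2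
        obtain ⟨hl1, hn1⟩ := hp1
        obtain ⟨hl2, hn2⟩ := hp2
        constructor
        · intro t ht
          rw [subtrees_compose] at ht
          rcases List.mem_cons.mp ht with rfl | ht
          · rfl
          · rcases List.mem_append.mp ht with ht | ht
            · exact hl1 t ht
            · exact hl2 t (List.mem_of_mem_tail ht)
        · rw [subtrees_compose]
          simp only [List.length_cons, List.length_append, List.length_tail, hn1, hn2]
          omega
      · rintro ⟨h1, h2⟩
        obtain ⟨b, cs⟩ := T
        have hb : b = 0 := h1 _ (self_mem_subtrees _)
        subst hb
        obtain ⟨c, cs', rfl⟩ : ∃ c cs', cs = c :: cs' := by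
          cases cs with
          | nil =>
            exfalso; rw [subtrees_node] at h2; simp at h2
          | cons c cs' => exact ⟨c, cs', rfl⟩
        have hlen : (subtrees (node 0 (c :: cs'))).length =
            1 + (subtrees c).length + ((cs'.map subtrees).flatten).length := by
          rw [subtrees_node]; simp; omega
        have hcpos := length_subtrees_pos c
        set a := (subtrees c).length - 1 with hadef
        have ha : a < n + 1 := by omega
        refine ⟨a, ha, c, node 0 cs', ⟨?_, ?_⟩, ?_⟩
        · refine (IH a ha c).mpr ⟨fun t ht => h1 t (mem_subtrees_of_mem_child _ _ (by simp) ht), by omega⟩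
        · refine (IH (n - a) (by omega) _).mpr ⟨?_, ?_⟩
          · intro t ht
            rw [subtrees_node] at ht
            rcases List.mem_cons.mp ht with rfl | ht
            · rfl
            · obtain ⟨l, hl, htl⟩ := List.mem_flatten.mp ht
              obtain ⟨c', hc', rfl⟩ := List.mem_map.mp hl
              exact h1 t (mem_subtrees_of_mem_child _ _ (by simp [hc']) htl)
          · rw [subtrees_node]
            simp only [List.length_cons]
            omega
        · rw [compose, children]

end LTree
namespace LTree

/-- leftmost child of the root exists and is a leaf -/
def po (t : LTree) : Bool := match t.children with | c :: _ => c.isLeaf | [] => false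

theorem oleaf_eq_countP (T : LTree) : oleaf T = (subtrees T).countP po := by
  rw [oleaf, sleaf, eleaf]
  generalize subtrees T = l
  induction l with
  | nil => simp
  | cons t l ih =>
    simp only [List.countP_cons, po]
    rcases t with ⟨a, _ | ⟨c, _ | ⟨d, cs⟩⟩⟩ <;> simp [children] at * <;> grind

theorem subtrees_head (T : LTree) : subtrees T = T :: (subtrees T).tail := by
  obtain ⟨a, cs⟩ := T; rw [subtrees_node]; simp

theorem subtreesL_head (T : LTree) : subtreesL 0 T = (0, T) :: (subtreesL 0 T).tail := by
  obtain ⟨a, cs⟩ := T; rw [subtreesL_node]; simp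

theorem countP_subtrees_compose (p : LTree → Bool) (T₁ T₂ : LTree) :
    (subtrees (compose T₁ T₂)).countP p + (if p T₂ then 1 else 0) =
    (if p (compose T₁ T₂) then 1 else 0) + (subtrees T₁).countP p + (subtrees T₂).countP p := by
  rw [subtrees_compose]
  conv_rhs => rw [subtrees_head T₂]
  simp only [List.countP_cons, List.countP_append]
  omega

theorem sum_map_subtrees_compose (g : LTree → ℕ) (T₁ T₂ : LTree) :
    ((subtrees (compose T₁ T₂)).map g).sum + g T₂ =
    g (compose T₁ T₂) + ((subtrees T₁).map g).sum + ((subtrees T₂).map g).sum := by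
  rw [subtrees_compose]
  conv_rhs => rw [subtrees_head T₂]
  simp only [List.map_cons, List.map_append, List.sum_cons, List.sum_append]
  omega

theorem countP_subtreesL_compose (q : ℕ × LTree → Bool) (T₁ T₂ : LTree) :
    (subtreesL 0 (compose T₁ T₂)).countP q + (if q (0, T₂) then 1 else 0) =
    (if q (0, compose T₁ T₂) then 1 else 0)
      + (subtreesL 0 T₁).countP (fun p => q (p.1+1, p.2)) + (subtreesL 0 T₂).countP q := by
  rw [subtreesL_compose]
  conv_rhs => rw [subtreesL_head T₂]
  simp only [List.countP_cons, List.countP_append, List.countP_map]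
  have : (List.countP (q ∘ fun p => (p.1 + 1, p.2)) (subtreesL 0 T₁))
      = List.countP (fun p => q (p.1 + 1, p.2)) (subtreesL 0 T₁) := by
    apply List.countP_congr; intro x _; rfl
  omega

end LTree
namespace LTree

def oddint (T : LTree) : ℕ :=
  (subtreesL 0 T).countP (fun p => p.1 % 2 == 1 && !p.2.isLeaf)

def oddleaf (T : LTree) : ℕ :=
  (subtreesL 0 T).countP (fun p => p.1 % 2 == 1 && p.2.isLeaf)

theorem isLeaf_compose (T₁ T₂ : LTree) : (compose T₁ T₂).isLeaf = false := by
  rw [compose, isLeaf]; simp [children]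

theorem po_compose (T₁ T₂ : LTree) : po (compose T₁ T₂) = T₁.isLeaf := by
  rw [compose, po]; simp [children]

theorem eq_of_isLeaf {T : LTree} (h : T.isLeaf = true) : T = node T.label [] := by
  obtain ⟨a, cs⟩ := T
  rw [isLeaf, children, List.isEmpty_iff] at h
  simp [h, label]

theorem subtrees_of_isLeaf {T : LTree} (h : T.isLeaf = true) : subtrees T = [T] := by
  conv_lhs => rw [eq_of_isLeaf h]
  rw [subtrees_node]; simp
  conv_rhs => rw [eq_of_isLeaf h]

theorem subtreesL_of_isLeaf {T : LTree} (h : T.isLeaf = true) : subtreesL 0 T = [(0, T)] := by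
  conv_lhs => rw [eq_of_isLeaf h]
  rw [subtreesL_node]; simp
  conv_rhs => rw [eq_of_isLeaf h]

theorem po_of_isLeaf {T : LTree} (h : T.isLeaf = true) : po T = false := by
  rw [po]
  rw [eq_of_isLeaf h]
  simp [children]

theorem oleaf_of_isLeaf {T : LTree} (h : T.isLeaf = true) : oleaf T = 0 := by
  rw [oleaf_eq_countP, subtrees_of_isLeaf h]
  simp [po_of_isLeaf h]

theorem yleaf_of_isLeaf {T : LTree} (h : T.isLeaf = true) : yleaf T = 0 := by
  rw [yleaf, subtrees_of_isLeaf h]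
  conv_lhs => rw [eq_of_isLeaf h]
  simp [children]

theorem elint_of_isLeaf {T : LTree} (h : T.isLeaf = true) : elint T = 0 := by
  rw [elint, subtreesL_of_isLeaf h]; simp [h]

theorem elleaf_of_isLeaf {T : LTree} (h : T.isLeaf = true) : elleaf T = 1 := by
  rw [elleaf, subtreesL_of_isLeaf h]; simp [h]

theorem oddint_of_isLeaf {T : LTree} (h : T.isLeaf = true) : oddint T = 0 := by
  rw [oddint, subtreesL_of_isLeaf h]; simp

theorem oddleaf_of_isLeaf {T : LTree} (h : T.isLeaf = true) : oddleaf T = 0 := by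
  rw [oddleaf, subtreesL_of_isLeaf h]; simp

theorem one_le_oleaf_of_po {T : LTree} (h : po T = true) : 1 ≤ oleaf T := by
  rw [oleaf_eq_countP]
  have : T ∈ subtrees T := self_mem_subtrees T
  calc 1 = [T].countP po := by simp [h]
  _ ≤ _ := by
      rw [subtrees_head T]
      simp [List.countP_cons, h]

theorem oleaf_compose (T₁ T₂ : LTree) :
    oleaf (compose T₁ T₂) + (if po T₂ then 1 else 0) =
    (if T₁.isLeaf then 1 else 0) + oleaf T₁ + oleaf T₂ := by
  have := countP_subtrees_compose po T₁ T₂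
  rw [po_compose] at this
  simp only [oleaf_eq_countP]
  omega

theorem yleaf_compose (T₁ T₂ : LTree) :
    yleaf (compose T₁ T₂) = yleaf T₁ + yleaf T₂ + (if po T₂ then 1 else 0) := by
  have h := sum_map_subtrees_compose (fun t => t.children.tail.countP isLeaf) T₁ T₂
  have h2 : (compose T₁ T₂).children.tail.countP isLeaf =
      T₂.children.tail.countP isLeaf + (if po T₂ then 1 else 0) := by
    rw [compose, children, List.tail_cons, po]
    rcases hcs : T₂.children with _ | ⟨c, cs⟩
    · simp
    · simp [List.countP_cons]
  simp only [yleaf] at *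
  omega

theorem elint_compose (T₁ T₂ : LTree) :
    elint (compose T₁ T₂) = oddint T₁ + elint T₂ + (if T₂.isLeaf then 1 else 0) := by
  have h := countP_subtreesL_compose (fun p => p.1 % 2 == 0 && !p.2.isLeaf) T₁ T₂
  simp only [isLeaf_compose] at h
  have h2 : (subtreesL 0 T₁).countP (fun p => (p.1+1) % 2 == 0 && !p.2.isLeaf)
      = oddint T₁ := by
    rw [oddint]
    apply List.countP_congr
    intro x _
    have : (x.1 + 1) % 2 = 0 ↔ x.1 % 2 = 1 := by omega
    rcases hx : x.2.isLeaf <;> simp [this]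
  rw [elint, elint] at *
  rcases h1 : T₂.isLeaf <;> simp [h1] at h ⊢ <;> omega

theorem elleaf_compose (T₁ T₂ : LTree) :
    elleaf (compose T₁ T₂) + (if T₂.isLeaf then 1 else 0) = oddleaf T₁ + elleaf T₂ := by
  have h := countP_subtreesL_compose (fun p => p.1 % 2 == 0 && p.2.isLeaf) T₁ T₂
  simp only [isLeaf_compose] at h
  have h2 : (subtreesL 0 T₁).countP (fun p => (p.1+1) % 2 == 0 && p.2.isLeaf)
      = oddleaf T₁ := by
    rw [oddleaf]
    apply List.countP_congr
    intro x _
    have : (x.1 + 1) % 2 = 0 ↔ x.1 % 2 = 1 := by omega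
    rcases hx : x.2.isLeaf <;> simp [this]
  rw [elleaf, elleaf] at *
  rcases h1 : T₂.isLeaf <;> simp [h1] at h ⊢ <;> omega

theorem oddint_compose (T₁ T₂ : LTree) :
    oddint (compose T₁ T₂) = elint T₁ + oddint T₂ := by
  have h := countP_subtreesL_compose (fun p => p.1 % 2 == 1 && !p.2.isLeaf) T₁ T₂
  have h2 : (subtreesL 0 T₁).countP (fun p => (p.1+1) % 2 == 1 && !p.2.isLeaf)
      = elint T₁ := by
    rw [elint]
    apply List.countP_congr
    intro x _
    have : (x.1 + 1) % 2 = 1 ↔ x.1 % 2 = 0 := by omega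
    rcases hx : x.2.isLeaf <;> simp [this]
  rw [oddint, oddint] at *
  simp at h
  omega

theorem oddleaf_compose (T₁ T₂ : LTree) :
    oddleaf (compose T₁ T₂) = elleaf T₁ + oddleaf T₂ := by
  have h := countP_subtreesL_compose (fun p => p.1 % 2 == 1 && p.2.isLeaf) T₁ T₂
  have h2 : (subtreesL 0 T₁).countP (fun p => (p.1+1) % 2 == 1 && p.2.isLeaf)
      = elleaf T₁ := by
    rw [elleaf]
    apply List.countP_congr
    intro x _
    have : (x.1 + 1) % 2 = 1 ↔ x.1 % 2 = 0 := by omega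
    rcases hx : x.2.isLeaf <;> simp [this]
  rw [oddleaf, oddleaf] at *
  simp at h
  omega

end LTree
namespace LTree
open MvPolynomial

noncomputable def fS (T : LTree) : MvPolynomial (Fin 2) ℤ := X 0 ^ oleaf T * X 1 ^ yleaf T
noncomputable def rS (T : LTree) : MvPolynomial (Fin 2) ℤ :=
  if po T then X 0 ^ (oleaf T - 1) * X 1 ^ (yleaf T + 1) else fS T
noncomputable def uS (T : LTree) : MvPolynomial (Fin 2) ℤ := X 0 ^ elint T * X 1 ^ elleaf T
noncomputable def vS (T : LTree) : MvPolynomial (Fin 2) ℤ := X 0 ^ oddint T * X 1 ^ oddleaf T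

theorem fS_of_isLeaf {T : LTree} (h : T.isLeaf = true) : fS T = 1 := by
  simp [fS, oleaf_of_isLeaf h, yleaf_of_isLeaf h]

theorem rS_of_isLeaf {T : LTree} (h : T.isLeaf = true) : rS T = 1 := by
  simp [rS, po_of_isLeaf h, fS_of_isLeaf h]

theorem uS_of_isLeaf {T : LTree} (h : T.isLeaf = true) : uS T = X 1 := by
  simp [uS, elint_of_isLeaf h, elleaf_of_isLeaf h]

theorem vS_of_isLeaf {T : LTree} (h : T.isLeaf = true) : vS T = 1 := by
  simp [vS, oddint_of_isLeaf h, oddleaf_of_isLeaf h]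

theorem fS_compose (T₁ T₂ : LTree) :
    fS (compose T₁ T₂) = (if T₁.isLeaf then X 0 else fS T₁) * rS T₂ := by
  have ho := oleaf_compose T₁ T₂
  have hy := yleaf_compose T₁ T₂
  rcases hp : po T₂ with _ | _ <;> rcases hl : T₁.isLeaf with _ | _ <;>
    simp only [hp, hl, if_true, if_false, Bool.false_eq_true] at ho hy ⊢
  · -- po T₂ = false, T₁ not leaf
    rw [rS, hp]
    simp only [Bool.false_eq_true, if_false, fS]
    rw [(by omega : oleaf (compose T₁ T₂) = oleaf T₁ + oleaf T₂),
        (by omega : yleaf (compose T₁ T₂) = yleaf T₁ + yleaf T₂), pow_add, pow_add]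
    ring
  · -- po T₂ = false, T₁ leaf
    rw [rS, hp]
    simp only [Bool.false_eq_true, if_false, fS, oleaf_of_isLeaf hl, yleaf_of_isLeaf hl] at ho hy ⊢
    rw [(by omega : oleaf (compose T₁ T₂) = 1 + oleaf T₂),
        (by omega : yleaf (compose T₁ T₂) = yleaf T₂), pow_add]
    ring
  · -- po T₂ = true, T₁ not leaf
    have h1 := one_le_oleaf_of_po hp
    rw [rS, hp]
    simp only [if_true, fS]
    rw [(by omega : oleaf (compose T₁ T₂) = oleaf T₁ + (oleaf T₂ - 1)),
        (by omega : yleaf (compose T₁ T₂) = yleaf T₁ + (yleaf T₂ + 1)), pow_add, pow_add]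
    ring
  · -- po T₂ = true, T₁ leaf
    have h1 := one_le_oleaf_of_po hp
    rw [rS, hp]
    simp only [if_true, fS, oleaf_of_isLeaf hl, yleaf_of_isLeaf hl] at ho hy ⊢
    rw [(by omega : oleaf (compose T₁ T₂) = 1 + (oleaf T₂ - 1)),
        (by omega : yleaf (compose T₁ T₂) = yleaf T₂ + 1), pow_add]
    ring

theorem rS_compose (T₁ T₂ : LTree) :
    rS (compose T₁ T₂) = (if T₁.isLeaf then X 1 else fS T₁) * rS T₂ := by
  have ho := oleaf_compose T₁ T₂
  have hy := yleaf_compose T₁ T₂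
  rw [rS, po_compose]
  rcases hl : T₁.isLeaf with _ | _
  · simp only [Bool.false_eq_true, if_false]
    rw [fS_compose, hl]
    simp
  · simp only [if_true, hl, if_true] at ho hy ⊢
    simp only [oleaf_of_isLeaf hl, yleaf_of_isLeaf hl] at ho hy
    rcases hp : po T₂ with _ | _ <;>
      simp only [hp, if_true, Bool.false_eq_true, if_false] at ho hy
    · rw [rS, hp]
      simp only [Bool.false_eq_true, if_false, fS]
      rw [(by omega : oleaf (compose T₁ T₂) - 1 = oleaf T₂),
          (by omega : yleaf (compose T₁ T₂) + 1 = yleaf T₂ + 1), pow_add]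
      ring
    · have h1 := one_le_oleaf_of_po hp
      rw [rS, hp]
      simp only [if_true]
      rw [(by omega : oleaf (compose T₁ T₂) - 1 = oleaf T₂ - 1),
          (by omega : yleaf (compose T₁ T₂) + 1 = (yleaf T₂ + 1) + 1), pow_add]
      ring

theorem uS_compose (T₁ T₂ : LTree) :
    uS (compose T₁ T₂) = vS T₁ * (if T₂.isLeaf then X 0 else uS T₂) := by
  have hi := elint_compose T₁ T₂
  have hl := elleaf_compose T₁ T₂
  rcases h2 : T₂.isLeaf with _ | _ <;>
    simp only [h2, if_true, Bool.false_eq_true, if_false] at hi hl ⊢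
  · rw [uS, vS, uS, hi, (by omega : elleaf (compose T₁ T₂) = oddleaf T₁ + elleaf T₂),
      pow_add, pow_add]
    ring
  · simp only [elint_of_isLeaf h2, elleaf_of_isLeaf h2] at hi hl
    rw [uS, vS, hi, (by omega : elleaf (compose T₁ T₂) = oddleaf T₁), pow_add]
    ring

theorem vS_compose (T₁ T₂ : LTree) :
    vS (compose T₁ T₂) = uS T₁ * (if T₂.isLeaf then 1 else vS T₂) := by
  have hi := oddint_compose T₁ T₂
  have hl := oddleaf_compose T₁ T₂
  rcases h2 : T₂.isLeaf with _ | _ <;>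
    simp only [h2, if_true, Bool.false_eq_true, if_false]
  · rw [uS, vS, vS, hi, hl, pow_add, pow_add]; ring
  · rw [uS, vS, hi, hl, oddint_of_isLeaf h2, oddleaf_of_isLeaf h2, pow_add, pow_add]
    simp

end LTree
namespace LTree

theorem label_of_mem_planeFinset {n : ℕ} {T : LTree} (h : T ∈ planeFinset n) :
    T.label = 0 :=
  ((mem_planeFinset n T).mp h).1 T (self_mem_subtrees T)

theorem length_of_mem_planeFinset {n : ℕ} {T : LTree} (h : T ∈ planeFinset n) :
    (subtrees T).length = n + 1 :=
  ((mem_planeFinset n T).mp h).2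

theorem mem_planeFinset_zero {T : LTree} (h : T ∈ planeFinset 0) : T = node 0 [] := by
  rw [planeFinset] at h
  simpa using h

theorem isLeaf_planeFinset_zero {T : LTree} (h : T ∈ planeFinset 0) : T.isLeaf = true := by
  rw [mem_planeFinset_zero h, isLeaf, children]
  rfl

theorem not_isLeaf_of_mem_planeFinset {n : ℕ} {T : LTree} (hn : 1 ≤ n)
    (h : T ∈ planeFinset n) : T.isLeaf = false := by
  rcases hl : T.isLeaf with _ | _
  · rfl
  · exfalso
    have := length_of_mem_planeFinset h
    rw [subtrees_of_isLeaf hl] at this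
    simp at this
    omega

theorem compose_inj {T₁ T₂ T₁' T₂' : LTree} (h2 : T₂.label = 0) (h2' : T₂'.label = 0)
    (h : compose T₁ T₂ = compose T₁' T₂') : T₁ = T₁' ∧ T₂ = T₂' := by
  rw [compose, compose, LTree.node.injEq, List.cons.injEq] at h
  refine ⟨h.2.1, ?_⟩
  rw [← eta T₂, ← eta T₂', h2, h2', h.2.2]

theorem sum_planeFinset_succ {M : Type*} [AddCommMonoid M] (φ : LTree → M) (n : ℕ) :
    ∑ T ∈ planeFinset (n+1), φ T =
    ∑ a ∈ Finset.range (n+1), ∑ T₁ ∈ planeFinset a,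
      ∑ T₂ ∈ planeFinset (n-a), φ (compose T₁ T₂) := by
  conv_lhs => rw [planeFinset]
  rw [Finset.sum_biUnion]
  · rw [← Finset.sum_attach (Finset.range (n+1)) (fun a => ∑ T₁ ∈ planeFinset a,
      ∑ T₂ ∈ planeFinset (n-a), φ (compose T₁ T₂))]
    refine Finset.sum_congr rfl (fun a _ => ?_)
    rw [Finset.sum_image, Finset.sum_product]
    rintro ⟨p1, p2⟩ hp ⟨q1, q2⟩ hq h
    rw [Finset.mem_coe, Finset.mem_product] at hp hq
    have := compose_inj (label_of_mem_planeFinset hp.2) (label_of_mem_planeFinset hq.2) h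
    rw [Prod.mk.injEq]
    exact this
  · intro a _ b _ hab
    rw [Function.onFun]
    rw [Finset.disjoint_left]
    rintro T hTa hTb
    simp only [Finset.mem_image, Finset.mem_product, Prod.exists] at hTa hTb
    obtain ⟨x1, x2, ⟨hx1, hx2⟩, hx⟩ := hTa
    obtain ⟨y1, y2, ⟨hy1, hy2⟩, hy⟩ := hTb
    have heq := compose_inj (label_of_mem_planeFinset hx2) (label_of_mem_planeFinset hy2)
      (hx.trans hy.symm)
    have h1 := length_of_mem_planeFinset hx1
    have h2 := length_of_mem_planeFinset hy1
    rw [heq.1] at h1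
    apply hab
    apply Subtype.ext
    omega

end LTree
namespace LTree
open MvPolynomial

noncomputable def AA (a : ℕ) : MvPolynomial (Fin 2) ℤ :=
  ∑ T ∈ planeFinset a, (if T.isLeaf then X 0 else uS T)

theorem key : ∀ n : ℕ,
    ((∑ T ∈ planeFinset n, rS T) = ∑ T ∈ planeFinset n, vS T) ∧
    (1 ≤ n → (∑ T ∈ planeFinset n, fS T) = ∑ T ∈ planeFinset n, uS T) := by
  intro n
  induction n using Nat.strong_induction_on with
  | _ n IH =>
    match n with
    | 0 =>
      constructor
      · rw [planeFinset]
        have hl : (node 0 [] : LTree).isLeaf = true := by rw [isLeaf, children]; rfl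
        simp [rS_of_isLeaf hl, vS_of_isLeaf hl]
      · omega
    | n+1 =>
      -- pointwise-sum facts
      have c4 : ∀ b : ℕ, (∑ T ∈ planeFinset b, (if T.isLeaf then 1 else vS T))
          = ∑ T ∈ planeFinset b, vS T := by
        intro b
        refine Finset.sum_congr rfl (fun T _ => ?_)
        rcases h : T.isLeaf with _ | _
        · simp
        · simp [vS_of_isLeaf h]
      have c3 : ∀ b ≤ n, (∑ T ∈ planeFinset b, rS T) = ∑ T ∈ planeFinset b, vS T :=
        fun b hb => (IH b (by omega)).1
      have c2 : ∀ a ≤ n, (∑ T ∈ planeFinset a, (if T.isLeaf then X 1 else fS T))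
          = ∑ T ∈ planeFinset a, uS T := by
        intro a ha
        rcases Nat.eq_zero_or_pos a with rfl | hpos
        · refine Finset.sum_congr rfl (fun T hT => ?_)
          have h := isLeaf_planeFinset_zero hT
          simp [h, uS_of_isLeaf h]
        · rw [← (IH a (by omega)).2 hpos]
          refine Finset.sum_congr rfl (fun T hT => ?_)
          simp [not_isLeaf_of_mem_planeFinset hpos hT]
      have c1 : ∀ a ≤ n, (∑ T ∈ planeFinset a, (if T.isLeaf then X 0 else fS T)) = AA a := by
        intro a ha
        rcases Nat.eq_zero_or_pos a with rfl | hpos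
        · exact Finset.sum_congr rfl (fun T hT => by simp [isLeaf_planeFinset_zero hT])
        · rw [AA]
          have h1 : ∀ T ∈ planeFinset a, (if T.isLeaf then (X 0 : MvPolynomial (Fin 2) ℤ)
              else fS T) = fS T := fun T hT => by
            simp [not_isLeaf_of_mem_planeFinset hpos hT]
          have h2 : ∀ T ∈ planeFinset a, (if T.isLeaf then (X 0 : MvPolynomial (Fin 2) ℤ)
              else uS T) = uS T := fun T hT => by
            simp [not_isLeaf_of_mem_planeFinset hpos hT]
          rw [Finset.sum_congr rfl h1, Finset.sum_congr rfl h2]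
          exact (IH a (by omega)).2 hpos
      constructor
      · -- R part
        rw [sum_planeFinset_succ rS n, sum_planeFinset_succ vS n]
        refine Finset.sum_congr rfl (fun a ha => ?_)
        have ha' : a ≤ n := by have := Finset.mem_range.mp ha; omega
        calc (∑ T₁ ∈ planeFinset a, ∑ T₂ ∈ planeFinset (n-a), rS (compose T₁ T₂))
            = (∑ T₁ ∈ planeFinset a, (if T₁.isLeaf then X 1 else fS T₁))
              * ∑ T₂ ∈ planeFinset (n-a), rS T₂ := by
              rw [Finset.sum_mul_sum]
              exact Finset.sum_congr rfl fun T₁ _ => Finset.sum_congr rfl fun T₂ _ =>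
                rS_compose T₁ T₂
          _ = (∑ T₁ ∈ planeFinset a, uS T₁) * ∑ T₂ ∈ planeFinset (n-a), vS T₂ := by
              rw [c2 a ha', c3 (n-a) (by omega)]
          _ = ∑ T₁ ∈ planeFinset a, ∑ T₂ ∈ planeFinset (n-a), vS (compose T₁ T₂) := by
              rw [← c4 (n-a), Finset.sum_mul_sum]
              exact Finset.sum_congr rfl fun T₁ _ => Finset.sum_congr rfl fun T₂ _ =>
                (vS_compose T₁ T₂).symm
      · -- F part
        intro _
        rw [sum_planeFinset_succ fS n, sum_planeFinset_succ uS n]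
        have hL : ∀ a ∈ Finset.range (n+1),
            (∑ T₁ ∈ planeFinset a, ∑ T₂ ∈ planeFinset (n-a), fS (compose T₁ T₂))
            = AA a * ∑ T ∈ planeFinset (n-a), vS T := by
          intro a ha
          have ha' : a ≤ n := by have := Finset.mem_range.mp ha; omega
          calc (∑ T₁ ∈ planeFinset a, ∑ T₂ ∈ planeFinset (n-a), fS (compose T₁ T₂))
              = (∑ T₁ ∈ planeFinset a, (if T₁.isLeaf then X 0 else fS T₁))
                * ∑ T₂ ∈ planeFinset (n-a), rS T₂ := by
                rw [Finset.sum_mul_sum]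
                exact Finset.sum_congr rfl fun T₁ _ => Finset.sum_congr rfl fun T₂ _ =>
                  fS_compose T₁ T₂
            _ = AA a * ∑ T ∈ planeFinset (n-a), vS T := by
                rw [c1 a ha', c3 (n-a) (by omega)]
        have hR : ∀ a ∈ Finset.range (n+1),
            (∑ T₁ ∈ planeFinset a, ∑ T₂ ∈ planeFinset (n-a), uS (compose T₁ T₂))
            = (∑ T ∈ planeFinset a, vS T) * AA (n-a) := by
          intro a _
          calc (∑ T₁ ∈ planeFinset a, ∑ T₂ ∈ planeFinset (n-a), uS (compose T₁ T₂))
              = (∑ T₁ ∈ planeFinset a, vS T₁)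
                * ∑ T₂ ∈ planeFinset (n-a), (if T₂.isLeaf then X 0 else uS T₂) := by
                rw [Finset.sum_mul_sum]
                exact Finset.sum_congr rfl fun T₁ _ => Finset.sum_congr rfl fun T₂ _ =>
                  uS_compose T₁ T₂
            _ = (∑ T ∈ planeFinset a, vS T) * AA (n-a) := by rw [AA]
        rw [Finset.sum_congr rfl hL, Finset.sum_congr rfl hR]
        rw [← Finset.sum_range_reflect (fun a => AA a * ∑ T ∈ planeFinset (n-a), vS T) (n+1)]
        refine Finset.sum_congr rfl (fun a ha => ?_)
        have ha' : a ≤ n := by have := Finset.mem_range.mp ha; omega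
        rw [(by omega : n + 1 - 1 - a = n - a), (by omega : n - (n - a) = a)]
        ring

end LTree

open MvPolynomial in
/-- **Theorem (new interpretation of the refined Narayana polynomials).**  For `n ≥ 1`,
`Σ_{T ∈ 𝒫_n} x^{oleaf(T)} y^{yleaf(T)} = Σ_{T ∈ 𝒫_n} x^{elint(T)} y^{elleaf(T)}`.
Here `x = X 0`, `y = X 1` in `ℤ[x,y]`. -/
theorem oleaf_yleaf_eq_elint_elleaf
    (n : ℕ) (hn : 1 ≤ n)
    (Pn : Finset LTree) (hPn : ∀ T, T ∈ Pn ↔ LTree.IsPlane n T) :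
    ∑ T ∈ Pn, (X 0 : MvPolynomial (Fin 2) ℤ) ^ LTree.oleaf T * X 1 ^ LTree.yleaf T
      = ∑ T ∈ Pn, (X 0 : MvPolynomial (Fin 2) ℤ) ^ LTree.elint T * X 1 ^ LTree.elleaf T := by
  classical
  have hP : Pn = LTree.planeFinset n :=
    Finset.ext fun T => (hPn T).trans (LTree.mem_planeFinset n T).symm
  rw [hP]
  have h := (LTree.key n).2 hn
  simpa [LTree.fS, LTree.uS] using h
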